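/- Let m and n be non-negative integers with n ≥ 1 and let x_1,…,x_n be nonzero complex numbers such that the 2n numbers x_1, x_1^{-1}, …, x_n, x_n^{-1} are pairwise distinct (this guarantees that all denominator determinants below are nonzero). Then s_{((2m)^n)}(x_1, x_1^{-1}, …, x_n, x_n^{-1}) + s_{((2m)^{n-1})}(x_1, x_1^{-1}, …, x_n, x_n^{-1}) = sp_{(m^n)}(x_1,…,x_n) · o^{even}_{(m^n)}(x_1,…,x_n), where both Schur functions are in the 2n variables x_1, x_1^{-1}, …, x_n, x_n^{-1} (the shape ((2m)^{n-1}) is padded with a final part equal to 0). -/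

import Mathlib

open Matrix Finset

/-- The `2n` variables `x₁, x₁⁻¹, x₂, x₂⁻¹, …, xₙ, xₙ⁻¹`. -/
noncomputable def pairVars {n : ℕ} (x : Fin n → ℂ) : Fin (2 * n) → ℂ :=
  fun i =>
    if (i : ℕ) % 2 = 0 then x ⟨(i : ℕ) / 2, by have := i.isLt; omega⟩
    else (x ⟨(i : ℕ) / 2, by have := i.isLt; omega⟩)⁻¹
/-- The Schur function `s_λ(x₁,…,x_N)` as a ratio of determinants,
for an integer shape `lam` (indexed by `Fin N`, i.e. 0-based). -/
noncomputable def schurChar {N : ℕ} (lam : Fin N → ℤ) (x : Fin N → ℂ) : ℂ :=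
  Matrix.det (Matrix.of fun h t : Fin N =>
      x h ^ (lam t + (N : ℤ) - 1 - ((t : ℕ) : ℤ))) /
    Matrix.det (Matrix.of fun h t : Fin N => x h ^ ((N : ℤ) - 1 - ((t : ℕ) : ℤ)))
/-- The symplectic character `sp_λ(x₁,…,x_N)` as a ratio of determinants,
for an integer shape `lam` (indexed by `Fin N`, i.e. 0-based). -/
noncomputable def spChar {N : ℕ} (lam : Fin N → ℤ) (x : Fin N → ℂ) : ℂ :=
  Matrix.det (Matrix.of fun h t : Fin N =>
      x h ^ (lam t + (N : ℤ) - ((t : ℕ) : ℤ)) -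
        x h ^ (-(lam t + (N : ℤ) - ((t : ℕ) : ℤ)))) /
    Matrix.det (Matrix.of fun h t : Fin N =>
      x h ^ ((N : ℤ) - ((t : ℕ) : ℤ)) - x h ^ (-((N : ℤ) - ((t : ℕ) : ℤ))))
/-- The even orthogonal character `o^even_λ(x₁,…,x_N)` for an integer shape
`lam`, computed directly from the variables. -/
noncomputable def oevenChar {N : ℕ} (lam : Fin N → ℤ) (x : Fin N → ℂ) : ℂ :=
  2 * Matrix.det (Matrix.of fun h t : Fin N =>
      x h ^ (lam t + (N : ℤ) - 1 - ((t : ℕ) : ℤ)) +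
        x h ^ (-(lam t + (N : ℤ) - 1 - ((t : ℕ) : ℤ)))) /
    Matrix.det (Matrix.of fun h t : Fin N =>
      x h ^ ((N : ℤ) - 1 - ((t : ℕ) : ℤ)) + x h ^ (-((N : ℤ) - 1 - ((t : ℕ) : ℤ))))

namespace SchurAux

/-- The paired variables indexed by a sum type. -/
noncomputable def zf {n : ℕ} (x : Fin n → ℂ) : Fin n ⊕ Fin n → ℂ :=
  Sum.elim x fun i => (x i)⁻¹

/-- The pairing equivalence `Fin (2n) ≃ Fin n ⊕ Fin n`. -/
def pe (n : ℕ) : Fin (2 * n) ≃ Fin n ⊕ Fin n where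
  toFun h := if (h : ℕ) % 2 = 0 then Sum.inl ⟨(h : ℕ) / 2, by have := h.isLt; omega⟩
             else Sum.inr ⟨(h : ℕ) / 2, by have := h.isLt; omega⟩
  invFun c := Sum.elim (fun i : Fin n => (⟨2 * i, by have := i.isLt; omega⟩ : Fin (2 * n)))
      (fun i : Fin n => (⟨2 * i + 1, by have := i.isLt; omega⟩ : Fin (2 * n))) c
  left_inv h := by
    dsimp only
    by_cases h0 : (h : ℕ) % 2 = 0
    · rw [if_pos h0]; simp only [Sum.elim_inl]
      exact Fin.ext (show 2 * ((h : ℕ) / 2) = (h : ℕ) from by omega)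
    · rw [if_neg h0]; simp only [Sum.elim_inr]
      exact Fin.ext (show 2 * ((h : ℕ) / 2) + 1 = (h : ℕ) from by omega)
  right_inv c := by
    rcases c with i | i
    · dsimp only [Sum.elim_inl]
      rw [if_pos (show 2 * (i : ℕ) % 2 = 0 from by omega)]
      exact congrArg Sum.inl (Fin.ext (show 2 * (i : ℕ) / 2 = (i : ℕ) from by omega))
    · dsimp only [Sum.elim_inr]
      rw [if_neg (show ¬(2 * (i : ℕ) + 1) % 2 = 0 from by omega)]
      exact congrArg Sum.inr (Fin.ext (show (2 * (i : ℕ) + 1) / 2 = (i : ℕ) from by omega))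

/-- The column equivalence used for the "positive" comparisons. -/
def phi (n : ℕ) : Fin (2 * n) ≃ Fin n ⊕ Fin n where
  toFun t := if h : (t : ℕ) < n then Sum.inl ⟨t, h⟩
             else Sum.inr ⟨2 * n - 1 - t, by have := t.isLt; omega⟩
  invFun c := Sum.elim (fun i : Fin n => (⟨i, by have := i.isLt; omega⟩ : Fin (2 * n)))
      (fun i : Fin n => (⟨2 * n - 1 - i, by have := i.isLt; omega⟩ : Fin (2 * n))) c
  left_inv t := by
    dsimp only
    by_cases h : (t : ℕ) < n
    · rw [dif_pos h]; exact Fin.ext rfl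
    · rw [dif_neg h]; simp only [Sum.elim_inr]
      exact Fin.ext (show 2 * n - 1 - (2 * n - 1 - (t : ℕ)) = (t : ℕ) from by
        have := t.isLt; omega)
  right_inv c := by
    rcases c with i | i
    · dsimp only [Sum.elim_inl]
      rw [dif_pos (show ((i : ℕ)) < n from i.isLt)]
    · dsimp only [Sum.elim_inr]
      rw [dif_neg (show ¬(2 * n - 1 - (i : ℕ) < n) from by have := i.isLt; omega)]
      exact congrArg Sum.inr (Fin.ext (show 2 * n - 1 - (2 * n - 1 - (i : ℕ)) = (i : ℕ) from by
        have := i.isLt; omega))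

def perm_a (n : ℕ) : Equiv.Perm (Fin (2 * n)) := (phi n).trans (pe n).symm

def pe' (n : ℕ) : Fin (2 * n) ≃ Fin n ⊕ Fin n :=
  (pe n).trans (Equiv.sumComm (Fin n) (Fin n))

def phib (n : ℕ) : Fin (2 * n) ≃ Fin n ⊕ Fin n :=
  ((finRotate (2 * n)).trans (perm_a n)).trans (pe' n)

/-- Exponents. -/
def bE (m n : ℕ) (t : Fin n) : ℤ := (m : ℤ) + (n : ℤ) - 1 - ((t : ℕ) : ℤ)
def cE (m n : ℕ) (t : Fin n) : ℤ := (m : ℤ) + (n : ℤ) - ((t : ℕ) : ℤ)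

noncomputable def Am (m n : ℕ) (x : Fin n → ℂ) : Matrix (Fin n) (Fin n) ℂ :=
  Matrix.of fun i t => x i ^ bE m n t + x i ^ (-bE m n t)

noncomputable def Bm (m n : ℕ) (x : Fin n → ℂ) : Matrix (Fin n) (Fin n) ℂ :=
  Matrix.of fun i t => x i ^ cE m n t - x i ^ (-cE m n t)

noncomputable def Mm (m n : ℕ) (x : Fin n → ℂ) :
    Matrix (Fin n ⊕ Fin n) (Fin n ⊕ Fin n) ℂ :=
  Matrix.of fun r c => Sum.elim
    (fun t : Fin n => zf x r ^ bE m n t + zf x r ^ (-bE m n t))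
    (fun t : Fin n => zf x r ^ cE m n t - zf x r ^ (-cE m n t)) c

noncomputable def Wm (m n : ℕ) (p q : ℤ) (x : Fin n → ℂ) :
    Matrix (Fin n ⊕ Fin n) (Fin n ⊕ Fin n) ℂ :=
  Matrix.of fun r c => Sum.elim
    (fun t : Fin n => if (t : ℕ) = n - 1 then zf x r ^ p
      else zf x r ^ bE m n t + zf x r ^ (-bE m n t))
    (fun t : Fin n => if (t : ℕ) = 0 then zf x r ^ q
      else zf x r ^ cE m n t - zf x r ^ (-cE m n t)) c

noncomputable def Vm (m n : ℕ) (p q : ℤ) (x : Fin n → ℂ) :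
    Matrix (Fin n ⊕ Fin n) (Fin n ⊕ Fin n) ℂ :=
  Matrix.of fun r c => Sum.elim
    (fun t : Fin n => if (t : ℕ) = n - 1 then zf x r ^ p else zf x r ^ bE m n t)
    (fun t : Fin n => if (t : ℕ) = 0 then zf x r ^ q else zf x r ^ (-cE m n t)) c

noncomputable def Tn (n : ℕ) : Matrix (Fin n ⊕ Fin n) (Fin n ⊕ Fin n) ℂ :=
  fromBlocks 1
    (Matrix.of fun a b : Fin n => if (a : ℕ) + 1 = (b : ℕ) then 1 else 0)
    (Matrix.of fun a b : Fin n => if (a : ℕ) = (b : ℕ) + 1 then 1 else 0)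
    (Matrix.of fun a b : Fin n => if (b : ℕ) = 0 then (if (a : ℕ) = 0 then 1 else 0)
      else (if a = b then -1 else 0))

noncomputable def N1m (m n : ℕ) (x : Fin n → ℂ) : Matrix (Fin (2 * n)) (Fin (2 * n)) ℂ :=
  Matrix.of fun h t : Fin (2 * n) =>
    pairVars x h ^ ((if (t : ℕ) < n then (2 * m : ℤ) else 0) + ((2 * n : ℕ) : ℤ) - 1 - ((t : ℕ) : ℤ))

noncomputable def N2m (m n : ℕ) (x : Fin n → ℂ) : Matrix (Fin (2 * n)) (Fin (2 * n)) ℂ :=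
  Matrix.of fun h t : Fin (2 * n) =>
    pairVars x h ^ ((if (t : ℕ) < n - 1 then (2 * m : ℤ) else 0) + ((2 * n : ℕ) : ℤ) - 1 - ((t : ℕ) : ℤ))

section lemmas

variable {m n : ℕ} {x : Fin n → ℂ}

lemma zf_ne (hx : ∀ i, x i ≠ 0) (c : Fin n ⊕ Fin n) : zf x c ≠ 0 := by
  rcases c with i | i
  · exact hx i
  · exact inv_ne_zero (hx i)

lemma pv_eq (x : Fin n → ℂ) (h : Fin (2 * n)) : pairVars x h = zf x (pe n h) := by
  unfold pairVars pe zf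
  by_cases h0 : (h : ℕ) % 2 = 0 <;> simp [h0]

lemma pv_ne (hx : ∀ i, x i ≠ 0) (h : Fin (2 * n)) : pairVars x h ≠ 0 := by
  rw [pv_eq]; exact zf_ne hx _

lemma zf_swap (x : Fin n → ℂ) (c : Fin n ⊕ Fin n) :
    zf x (Equiv.sumComm (Fin n) (Fin n) c) = (zf x c)⁻¹ := by
  rcases c with i | i <;> simp [zf]

lemma prod_pv (hx : ∀ i, x i ≠ 0) (s : ℤ) : ∏ h : Fin (2 * n), pairVars x h ^ s = 1 := by
  have h1 : ∏ h : Fin (2 * n), pairVars x h ^ s = ∏ c : Fin n ⊕ Fin n, zf x c ^ s := by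
    rw [← Equiv.prod_comp (pe n) (fun c => zf x c ^ s)]
    exact Finset.prod_congr rfl fun h _ => by rw [pv_eq]
  rw [h1, Fintype.prod_sum_type, ← Finset.prod_mul_distrib]
  apply Finset.prod_eq_one
  intro i _
  simp only [zf, Sum.elim_inl, Sum.elim_inr]
  rw [_root_.inv_zpow]
  exact mul_inv_cancel₀ (zpow_ne_zero _ (hx i))

lemma det_via (hx : ∀ i, x i ≠ 0) (g f : Fin (2 * n) ≃ (Fin n ⊕ Fin n))
    (X : Matrix (Fin n ⊕ Fin n) (Fin n ⊕ Fin n) ℂ)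
    (N : Matrix (Fin (2 * n)) (Fin (2 * n)) ℂ) (s : ℤ)
    (hN : ∀ h t, N h t = pairVars x h ^ s * X (g h) (f t)) :
    N.det = ((Equiv.Perm.sign (f.trans g.symm) : ℤ) : ℂ) * X.det := by
  have h1 : N = Matrix.of fun h t => (fun h' : Fin (2 * n) => pairVars x h' ^ s) h *
      ((X.submatrix g g).submatrix id ⇑(f.trans g.symm)) h t := by
    ext h t
    rw [hN]
    simp only [Matrix.submatrix_apply, id_eq, Equiv.trans_apply, Equiv.apply_symm_apply,
      Matrix.of_apply]
  rw [h1, Matrix.det_mul_column, prod_pv hx s, one_mul, Matrix.det_permute',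
    Matrix.det_submatrix_equiv_self]

lemma sign_rot (hn : 1 ≤ n) : Equiv.Perm.sign (finRotate (2 * n)) = -1 := by
  obtain ⟨n', rfl⟩ : ∃ k, n = k + 1 := ⟨n - 1, by omega⟩
  rw [show 2 * (n' + 1) = (2 * n' + 1) + 1 from by ring, sign_finRotate]
  exact Odd.neg_one_pow ⟨n', by omega⟩

lemma det_M (x : Fin n → ℂ) :
    (Mm m n x).det = (-2 : ℂ) ^ n * ((Am m n x).det * (Bm m n x).det) := by
  have hM : Mm m n x = fromBlocks (Am m n x) (Bm m n x) (Am m n x) (-(Bm m n x)) := by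
    ext r c
    rcases r with i | i <;> rcases c with t | t <;>
      simp only [Mm, Am, Bm, zf, Matrix.of_apply, Sum.elim_inl, Sum.elim_inr,
        Matrix.fromBlocks_apply₁₁, Matrix.fromBlocks_apply₁₂, Matrix.fromBlocks_apply₂₁,
        Matrix.fromBlocks_apply₂₂, Matrix.neg_apply, _root_.inv_zpow, ← _root_.zpow_neg, neg_neg] <;>
      ring
  have hfac : fromBlocks (Am m n x) (Bm m n x) (Am m n x) (-(Bm m n x)) =
      fromBlocks (1 : Matrix (Fin n) (Fin n) ℂ) 0 1 1 *
        fromBlocks (Am m n x) (Bm m n x) 0 ((-2 : ℂ) • Bm m n x) := by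
    rw [Matrix.fromBlocks_multiply]
    have e4 : Bm m n x + 1 * ((-2 : ℂ) • Bm m n x) = -(Bm m n x) := by
      rw [Matrix.one_mul]
      ext i j
      simp only [Matrix.add_apply, Matrix.smul_apply, Matrix.neg_apply, smul_eq_mul]
      ring
    rw [Matrix.one_mul, Matrix.one_mul, Matrix.zero_mul, Matrix.zero_mul, add_zero, add_zero,
      Matrix.one_mul, add_zero, e4]
  rw [hM, hfac, Matrix.det_mul, Matrix.det_fromBlocks_zero₁₂, Matrix.det_one, one_mul,
    Matrix.det_fromBlocks_zero₂₁, Matrix.det_smul]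
  simp only [Fintype.card_fin]
  ring

lemma sum_onehot {k : ℕ} (v : Fin k → ℂ) (P : Fin k → Prop) [DecidablePred P] (j : Fin k)
    (hj : P j) (huniq : ∀ a, P a → a = j) :
    (∑ a : Fin k, v a * (if P a then 1 else 0)) = v j := by
  rw [Finset.sum_eq_single j]
  · rw [if_pos hj, mul_one]
  · intro a _ ha
    rw [if_neg (fun hPa => ha (huniq a hPa)), mul_zero]
  · intro hmem; exact absurd (Finset.mem_univ j) hmem

lemma sum_zero_of {k : ℕ} (v : Fin k → ℂ) (P : Fin k → Prop) [DecidablePred P]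
    (h : ∀ a, ¬ P a) : (∑ a : Fin k, v a * (if P a then 1 else 0)) = 0 := by
  apply Finset.sum_eq_zero
  intro a _
  rw [if_neg (h a), mul_zero]

lemma detT (hn : 1 ≤ n) : (Tn n).det = (-2 : ℂ) ^ (n - 1) := by
  rw [Tn, Matrix.det_fromBlocks_one₁₁]
  have hd : (Matrix.of fun a b : Fin n => if (b : ℕ) = 0 then (if (a : ℕ) = 0 then (1 : ℂ) else 0)
        else (if a = b then -1 else 0)) -
      (Matrix.of fun a b : Fin n => if (a : ℕ) = (b : ℕ) + 1 then (1 : ℂ) else 0) *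
      (Matrix.of fun a b : Fin n => if (a : ℕ) + 1 = (b : ℕ) then (1 : ℂ) else 0) =
      Matrix.diagonal (fun t : Fin n => if (t : ℕ) = 0 then (1 : ℂ) else -2) := by
    ext a b
    rw [Matrix.sub_apply, Matrix.mul_apply]
    have hUL : (∑ s : Fin n, (Matrix.of fun a b : Fin n =>
          if (a : ℕ) = (b : ℕ) + 1 then (1 : ℂ) else 0) a s *
          (Matrix.of fun a b : Fin n => if (a : ℕ) + 1 = (b : ℕ) then (1 : ℂ) else 0) s b) =
        if (a : ℕ) = (b : ℕ) ∧ (b : ℕ) ≠ 0 then 1 else 0 := by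
      by_cases hb : (b : ℕ) = 0
      · rw [if_neg (show ¬((a : ℕ) = (b : ℕ) ∧ (b : ℕ) ≠ 0) from by omega)]
        apply Finset.sum_eq_zero
        intro s _
        rw [Matrix.of_apply, Matrix.of_apply,
          if_neg (show ¬((s : ℕ) + 1 = (b : ℕ)) from by omega), mul_zero]
      · rw [Finset.sum_eq_single (⟨(b : ℕ) - 1, by have := b.isLt; omega⟩ : Fin n)]
        · rw [Matrix.of_apply, Matrix.of_apply,
            if_pos (show ((⟨(b : ℕ) - 1, by have := b.isLt; omega⟩ : Fin n) : ℕ) + 1 = (b : ℕ)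
              from by simp only [Fin.val_mk]; omega), mul_one]
          by_cases hab : (a : ℕ) = (b : ℕ)
          · rw [if_pos (show (a : ℕ) = ((⟨(b : ℕ) - 1, by have := b.isLt; omega⟩ : Fin n) : ℕ) + 1
              from by simp only [Fin.val_mk]; omega), if_pos ⟨hab, hb⟩]
          · rw [if_neg (show ¬((a : ℕ) = ((⟨(b : ℕ) - 1, by have := b.isLt; omega⟩ : Fin n) : ℕ) + 1)
              from by simp only [Fin.val_mk]; omega), if_neg (by tauto)]
        · intro s _ hs
          rw [Matrix.of_apply, Matrix.of_apply,
            if_neg (show ¬((s : ℕ) + 1 = (b : ℕ)) from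
              fun hc => hs (Fin.ext (by simp only [Fin.val_mk]; omega))), mul_zero]
        · intro hmem; exact absurd (Finset.mem_univ _) hmem
    rw [hUL, Matrix.of_apply, Matrix.diagonal_apply]
    by_cases hab : a = b
    · subst hab
      by_cases h0 : (a : ℕ) = 0
      · simp [h0]
      · simp [h0]; norm_num
    · have hvab : ¬((a : ℕ) = (b : ℕ)) := fun hc => hab (Fin.ext hc)
      by_cases hb : (b : ℕ) = 0
      · have ha0 : ¬((a : ℕ) = 0) := by omega
        simp [hab, hb, hvab, ha0]
      · simp [hab, hb, hvab]
  rw [hd, Matrix.det_diagonal]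
  obtain ⟨n', rfl⟩ : ∃ k, n = k + 1 := ⟨n - 1, by omega⟩
  rw [Fin.prod_univ_succ]
  simp only [Fin.val_zero, if_pos rfl, one_mul, Fin.val_succ]
  have : ∀ i : Fin n', (if (i : ℕ) + 1 = 0 then (1 : ℂ) else -2) = -2 := fun i => if_neg (by omega)
  rw [Finset.prod_congr rfl (fun i _ => this i), Finset.prod_const]
  simp

lemma WVT (p q : ℤ) (x : Fin n → ℂ) : Wm m n p q x = Vm m n p q x * Tn n := by
  ext r c
  rw [Matrix.mul_apply, Fintype.sum_sum_type]
  rcases c with t | t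
  · have h1 : (∑ a : Fin n, Vm m n p q x r (Sum.inl a) * Tn n (Sum.inl a) (Sum.inl t))
        = Vm m n p q x r (Sum.inl t) := by
      rw [Finset.sum_congr rfl (fun a _ => by
        rw [show Tn n (Sum.inl a) (Sum.inl t) = if a = t then 1 else 0 from by
          simp [Tn, Matrix.fromBlocks_apply₁₁, Matrix.one_apply]])]
      exact sum_onehot _ (fun a => a = t) t rfl (fun a h => h)
    have h2 : ∀ a : Fin n, Tn n (Sum.inr a) (Sum.inl t)
        = if (a : ℕ) = (t : ℕ) + 1 then 1 else 0 := fun a => by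
      simp [Tn, Matrix.fromBlocks_apply₂₁]
    by_cases ht : (t : ℕ) + 1 < n
    · have h3 : (∑ a : Fin n, Vm m n p q x r (Sum.inr a) * Tn n (Sum.inr a) (Sum.inl t))
          = Vm m n p q x r (Sum.inr ⟨(t : ℕ) + 1, ht⟩) := by
        rw [Finset.sum_congr rfl (fun a _ => by rw [h2 a])]
        exact sum_onehot _ (fun a : Fin n => (a : ℕ) = (t : ℕ) + 1) ⟨(t : ℕ) + 1, ht⟩
          (by simp) (fun a h => Fin.ext (by simpa using h))
      rw [h1, h3, Wm, Vm]
      simp only [Matrix.of_apply, Sum.elim_inl, Sum.elim_inr]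
      rw [if_neg (show ¬((t : ℕ) = n - 1) from by omega),
          if_neg (show ¬((t : ℕ) = n - 1) from by omega),
          if_neg (show ¬(((⟨(t : ℕ) + 1, ht⟩ : Fin n) : ℕ) = 0) from by
            simp only [Fin.val_mk]; omega)]
      congr 1
      congr 1
      simp only [bE, cE, Fin.val_mk]
      push_cast
      ring
    · have h3 : (∑ a : Fin n, Vm m n p q x r (Sum.inr a) * Tn n (Sum.inr a) (Sum.inl t)) = 0 := by
        rw [Finset.sum_congr rfl (fun a _ => by rw [h2 a])]
        exact sum_zero_of _ _ (fun a => by have := a.isLt; omega)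
      have htv : (t : ℕ) = n - 1 := by have := t.isLt; omega
      rw [h1, h3, add_zero, Wm, Vm]
      simp only [Matrix.of_apply, Sum.elim_inl]
      rw [if_pos htv, if_pos htv]
  · have h2 : ∀ a : Fin n, Tn n (Sum.inl a) (Sum.inr t)
        = if (a : ℕ) + 1 = (t : ℕ) then 1 else 0 := fun a => by
      simp [Tn, Matrix.fromBlocks_apply₁₂]
    have h4 : ∀ a : Fin n, Tn n (Sum.inr a) (Sum.inr t)
        = if (t : ℕ) = 0 then (if (a : ℕ) = 0 then (1 : ℂ) else 0)
          else (if a = t then -1 else 0) := fun a => by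
      simp [Tn, Matrix.fromBlocks_apply₂₂]
    by_cases ht : (t : ℕ) = 0
    · have h1 : (∑ a : Fin n, Vm m n p q x r (Sum.inl a) * Tn n (Sum.inl a) (Sum.inr t)) = 0 := by
        rw [Finset.sum_congr rfl (fun a _ => by rw [h2 a])]
        exact sum_zero_of _ _ (fun a => by omega)
      have h3 : (∑ a : Fin n, Vm m n p q x r (Sum.inr a) * Tn n (Sum.inr a) (Sum.inr t))
          = Vm m n p q x r (Sum.inr t) := by
        rw [Finset.sum_congr rfl (fun a _ => by rw [h4 a, if_pos ht])]
        exact sum_onehot _ (fun a : Fin n => (a : ℕ) = 0) t ht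
          (fun a h => Fin.ext (by omega))
      rw [h1, h3, zero_add, Wm, Vm]
      simp only [Matrix.of_apply, Sum.elim_inr]
      rw [if_pos ht, if_pos ht]
    · have h1 : (∑ a : Fin n, Vm m n p q x r (Sum.inl a) * Tn n (Sum.inl a) (Sum.inr t))
          = Vm m n p q x r (Sum.inl ⟨(t : ℕ) - 1, by have := t.isLt; omega⟩) := by
        rw [Finset.sum_congr rfl (fun a _ => by rw [h2 a])]
        exact sum_onehot _ (fun a : Fin n => (a : ℕ) + 1 = (t : ℕ))
          ⟨(t : ℕ) - 1, by have := t.isLt; omega⟩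
          (by simp only [Fin.val_mk]; omega) (fun a h => Fin.ext (by simp only [Fin.val_mk]; omega))
      have h3 : (∑ a : Fin n, Vm m n p q x r (Sum.inr a) * Tn n (Sum.inr a) (Sum.inr t))
          = -(Vm m n p q x r (Sum.inr t)) := by
        rw [Finset.sum_congr rfl (fun a _ => show
          Vm m n p q x r (Sum.inr a) * Tn n (Sum.inr a) (Sum.inr t)
            = -(Vm m n p q x r (Sum.inr a) * (if a = t then 1 else 0)) from by
          rw [h4 a, if_neg ht]; split_ifs <;> ring)]
        rw [Finset.sum_neg_distrib, sum_onehot _ (fun a => a = t) t rfl (fun a h => h)]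
      rw [h1, h3, Wm, Vm]
      simp only [Matrix.of_apply, Sum.elim_inl, Sum.elim_inr]
      rw [if_neg ht, if_neg ht,
        if_neg (show ¬(((⟨(t : ℕ) - 1, by have := t.isLt; omega⟩ : Fin n) : ℕ) = n - 1) from by
          have := t.isLt; simp only [Fin.val_mk]; omega)]
      rw [sub_eq_add_neg]
      congr 2
      simp only [bE, cE, Fin.val_mk]
      push_cast [Nat.cast_sub (show 1 ≤ (t : ℕ) from by omega)]
      ring

lemma split (hn : 1 ≤ n) (x : Fin n → ℂ) :
    (Mm m n x).det =
      (Wm m n (m : ℤ) ((m : ℤ) + n) x).det - (Wm m n (m : ℤ) (-((m : ℤ) + n)) x).det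
        + (Wm m n (-(m : ℤ)) ((m : ℤ) + n) x).det
        - (Wm m n (-(m : ℤ)) (-((m : ℤ) + n)) x).det := by
  set l0 : Fin n ⊕ Fin n := Sum.inl ⟨n - 1, by omega⟩ with hl0
  set r0 : Fin n ⊕ Fin n := Sum.inr ⟨0, by omega⟩ with hr0
  have hnel : ∀ t : Fin n, (t : ℕ) ≠ n - 1 → (Sum.inl t : Fin n ⊕ Fin n) ≠ l0 := by
    intro t h hc
    rw [hl0] at hc
    injection hc with hc'
    exact h (by rw [hc'])
  have hner : ∀ t : Fin n, (t : ℕ) ≠ 0 → (Sum.inr t : Fin n ⊕ Fin n) ≠ r0 := by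
    intro t h hc
    rw [hr0] at hc
    injection hc with hc'
    exact h (by rw [hc'])
  have hlr : ∀ t : Fin n, (Sum.inl t : Fin n ⊕ Fin n) ≠ r0 := by
    intro t hc; rw [hr0] at hc; exact Sum.inl_ne_inr hc
  have hrl : ∀ t : Fin n, (Sum.inr t : Fin n ⊕ Fin n) ≠ l0 := by
    intro t hc; rw [hl0] at hc; exact Sum.inr_ne_inl hc
  have hPW : ∀ p q : ℤ,
      ((Mm m n x).updateCol l0 (fun r => zf x r ^ p)).updateCol r0 (fun r => zf x r ^ q)
        = Wm m n p q x := by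
    intro p q
    ext r c
    rcases c with t | t
    · rw [Matrix.updateCol_apply, if_neg (hlr t), Matrix.updateCol_apply]
      by_cases htv : (t : ℕ) = n - 1
      · have : (Sum.inl t : Fin n ⊕ Fin n) = l0 := by
          rw [hl0]; exact congrArg Sum.inl (Fin.ext (by simp only [Fin.val_mk]; omega))
        rw [if_pos this, Wm]
        simp only [Matrix.of_apply, Sum.elim_inl]
        rw [if_pos htv]
      · rw [if_neg (hnel t htv), Mm, Wm]
        simp only [Matrix.of_apply, Sum.elim_inl]
        rw [if_neg htv]
    · by_cases htv : (t : ℕ) = 0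
      · have : (Sum.inr t : Fin n ⊕ Fin n) = r0 := by
          rw [hr0]; exact congrArg Sum.inr (Fin.ext (by simp only [Fin.val_mk]; omega))
        rw [Matrix.updateCol_apply, if_pos this, Wm]
        simp only [Matrix.of_apply, Sum.elim_inr]
        rw [if_pos htv]
      · rw [Matrix.updateCol_apply, if_neg (hner t htv), Matrix.updateCol_apply,
          if_neg (hrl t), Mm, Wm]
        simp only [Matrix.of_apply, Sum.elim_inr]
        rw [if_neg htv]
  have hsplit2 : ∀ p : ℤ,
      ((Mm m n x).updateCol l0 (fun r => zf x r ^ p)).det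
        = (Wm m n p ((m : ℤ) + n) x).det - (Wm m n p (-((m : ℤ) + n)) x).det := by
    intro p
    have hupd : (Mm m n x).updateCol l0 (fun r => zf x r ^ p)
        = (((Mm m n x).updateCol l0 (fun r => zf x r ^ p)).updateCol r0
          ((fun r => zf x r ^ ((m : ℤ) + n)) + (-1 : ℂ) • (fun r => zf x r ^ (-((m : ℤ) + n))))) := by
      ext r c
      simp only [Matrix.updateCol_apply]
      by_cases hc : c = r0
      · subst hc
        rw [if_pos rfl, hr0, Mm]
        simp only [Matrix.of_apply, Sum.elim_inr, Pi.add_apply, Pi.smul_apply, smul_eq_mul]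
        have hce : cE m n ⟨0, by omega⟩ = (m : ℤ) + n := by
          simp only [cE, Fin.val_mk]
          push_cast
          ring
        rw [hce, if_neg (hrl _)]
        ring
      · rw [if_neg hc]
    rw [hupd, Matrix.det_updateCol_add, Matrix.det_updateCol_smul, hPW, hPW]
    ring
  have hupd1 : (Mm m n x).det
      = ((Mm m n x).updateCol l0 (fun r => zf x r ^ (m : ℤ))).det
        + ((Mm m n x).updateCol l0 (fun r => zf x r ^ (-(m : ℤ)))).det := by
    have h0 : Mm m n x = (Mm m n x).updateCol l0
        ((fun r => zf x r ^ (m : ℤ)) + (fun r => zf x r ^ (-(m : ℤ)))) := by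
      ext r c
      rw [Matrix.updateCol_apply]
      by_cases hc : c = l0
      · rw [if_pos hc, hc, hl0, Mm]
        simp only [Matrix.of_apply, Sum.elim_inl, Pi.add_apply]
        have hbe : bE m n ⟨n - 1, by omega⟩ = (m : ℤ) := by
          simp only [bE, Fin.val_mk]
          push_cast [Nat.cast_sub hn]
          ring
        rw [hbe]
      · rw [if_neg hc]
    conv_lhs => rw [h0]
    rw [Matrix.det_updateCol_add]
  rw [hupd1, hsplit2, hsplit2]
  ring

lemma phi_eval (t : Fin (2 * n)) : phi n t =
    if h : (t : ℕ) < n then Sum.inl ⟨(t : ℕ), h⟩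
    else Sum.inr ⟨2 * n - 1 - (t : ℕ), by have := t.isLt; omega⟩ := rfl

lemma phi_lt (t : Fin (2 * n)) (h : (t : ℕ) < n) : phi n t = Sum.inl ⟨(t : ℕ), h⟩ := by
  rw [phi_eval, dif_pos h]

lemma phi_ge (t : Fin (2 * n)) (h : ¬((t : ℕ) < n)) :
    phi n t = Sum.inr ⟨2 * n - 1 - (t : ℕ), by have := t.isLt; omega⟩ := by
  rw [phi_eval, dif_neg h]

lemma Vm_inl (p q : ℤ) (r : Fin n ⊕ Fin n) (t : Fin n) :
    Vm m n p q x r (Sum.inl t) =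
      if (t : ℕ) = n - 1 then zf x r ^ p else zf x r ^ bE m n t := rfl

lemma Vm_inr (p q : ℤ) (r : Fin n ⊕ Fin n) (t : Fin n) :
    Vm m n p q x r (Sum.inr t) =
      if (t : ℕ) = 0 then zf x r ^ q else zf x r ^ (-cE m n t) := rfl

lemma rot_val' (N : ℕ) (hN : 2 ≤ N) (t : Fin N) :
    (((finRotate N) t : Fin N) : ℕ) = ((t : ℕ) + 1) % N := by
  obtain ⟨K, rfl⟩ : ∃ K, N = K + 2 := ⟨N - 2, by omega⟩
  show (((finRotate (K + 1 + 1)) t : Fin (K + 1 + 1)) : ℕ) = ((t : ℕ) + 1) % (K + 1 + 1)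
  rw [finRotate_succ_apply, Fin.val_add]
  norm_num

lemma rot_val (hn : 1 ≤ n) (t : Fin (2 * n)) :
    (((finRotate (2 * n)) t : Fin (2 * n)) : ℕ) = ((t : ℕ) + 1) % (2 * n) :=
  rot_val' (2 * n) (by omega) t

lemma phib_eq (t : Fin (2 * n)) :
    phib n t = (Equiv.sumComm (Fin n) (Fin n)) (phi n ((finRotate (2 * n)) t)) := by
  show (pe' n) ((pe n).symm (phi n ((finRotate (2 * n)) t))) = _
  rw [pe', Equiv.trans_apply, Equiv.apply_symm_apply]

lemma L1 (hn : 1 ≤ n) (hx : ∀ i, x i ≠ 0) :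
    (N1m m n x).det = ((Equiv.Perm.sign (perm_a n) : ℤ) : ℂ) *
      (Vm m n (m : ℤ) (-((m : ℤ) + n)) x).det := by
  refine det_via hx (pe n) (phi n) _ _ ((m : ℤ) + n) ?_
  intro h t
  have hw : zf x (pe n h) ≠ 0 := zf_ne hx _
  rw [N1m]
  simp only [Matrix.of_apply]
  rw [pv_eq x h]
  by_cases h1 : (t : ℕ) < n
  · rw [phi_lt t h1, Vm_inl]
    simp only [Fin.val_mk]
    by_cases h2 : (t : ℕ) = n - 1
    · rw [if_pos h2, if_pos h1, ← zpow_add₀ hw]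
      congr 1
      push_cast
      omega
    · rw [if_neg h2, if_pos h1, ← zpow_add₀ hw]
      congr 1
      simp only [bE]
      push_cast
      omega
  · rw [phi_ge t h1, Vm_inr]
    simp only [Fin.val_mk]
    by_cases h2 : 2 * n - 1 - (t : ℕ) = 0
    · rw [if_pos h2, if_neg h1, ← zpow_add₀ hw]
      congr 1
      have h3 : (t : ℕ) = 2 * n - 1 := by omega
      push_cast
      omega
    · rw [if_neg h2, if_neg h1, ← zpow_add₀ hw]
      congr 1
      simp only [cE, Fin.val_mk]
      push_cast
      omega

lemma L2 (hn : 1 ≤ n) (hx : ∀ i, x i ≠ 0) :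
    (N2m m n x).det = ((Equiv.Perm.sign (perm_a n) : ℤ) : ℂ) *
      (Vm m n (-(m : ℤ)) (-((m : ℤ) + n)) x).det := by
  refine det_via hx (pe n) (phi n) _ _ ((m : ℤ) + n) ?_
  intro h t
  have hw : zf x (pe n h) ≠ 0 := zf_ne hx _
  rw [N2m]
  simp only [Matrix.of_apply]
  rw [pv_eq x h]
  by_cases h1 : (t : ℕ) < n
  · rw [phi_lt t h1, Vm_inl]
    simp only [Fin.val_mk]
    by_cases h2 : (t : ℕ) = n - 1
    · rw [if_pos h2, if_neg (show ¬((t : ℕ) < n - 1) from by omega), ← zpow_add₀ hw]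
      congr 1
      push_cast
      omega
    · rw [if_neg h2, if_pos (show (t : ℕ) < n - 1 from by omega), ← zpow_add₀ hw]
      congr 1
      simp only [bE]
      push_cast
      omega
  · rw [phi_ge t h1, Vm_inr]
    simp only [Fin.val_mk]
    by_cases h2 : 2 * n - 1 - (t : ℕ) = 0
    · rw [if_pos h2, if_neg (show ¬((t : ℕ) < n - 1) from by omega), ← zpow_add₀ hw]
      congr 1
      push_cast
      omega
    · rw [if_neg h2, if_neg (show ¬((t : ℕ) < n - 1) from by omega), ← zpow_add₀ hw]
      congr 1
      simp only [cE, Fin.val_mk]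
      push_cast
      omega

lemma L3 (hn : 1 ≤ n) (hx : ∀ i, x i ≠ 0) :
    (N1m m n x).det = -(((Equiv.Perm.sign (perm_a n) : ℤ) : ℂ)) *
      (Vm m n (-(m : ℤ)) ((m : ℤ) + n) x).det := by
  have hperm : (phib n).trans (pe' n).symm = (perm_a n) * (finRotate (2 * n)) := by
    rw [phib, Equiv.trans_assoc, Equiv.self_trans_symm, Equiv.trans_refl]
    rfl
  have hsign : ((Equiv.Perm.sign ((phib n).trans (pe' n).symm) : ℤ) : ℂ)
      = -(((Equiv.Perm.sign (perm_a n) : ℤ) : ℂ)) := by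
    rw [hperm, _root_.map_mul, sign_rot hn]
    push_cast
    ring
  rw [← hsign]
  refine det_via hx (pe' n) (phib n) _ _ ((m : ℤ) + n) ?_
  intro h t
  have hw : zf x (pe n h) ≠ 0 := zf_ne hx _
  have hrow : zf x (pe' n h) = (zf x (pe n h))⁻¹ := by
    rw [show pe' n h = Equiv.sumComm (Fin n) (Fin n) (pe n h) from rfl, zf_swap]
  rw [N1m]
  simp only [Matrix.of_apply]
  rw [pv_eq x h, phib_eq]
  have hval := rot_val hn t
  have htlt := t.isLt
  have hcase : ((((finRotate (2 * n)) t : Fin (2 * n)) : ℕ) = (t : ℕ) + 1 ∧ (t : ℕ) + 1 < 2 * n)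
      ∨ ((((finRotate (2 * n)) t : Fin (2 * n)) : ℕ) = 0 ∧ (t : ℕ) = 2 * n - 1) := by
    by_cases hlt : (t : ℕ) + 1 < 2 * n
    · left
      exact ⟨by rw [hval]; exact Nat.mod_eq_of_lt hlt, hlt⟩
    · right
      refine ⟨?_, by omega⟩
      rw [hval, show (t : ℕ) + 1 = 2 * n from by omega, Nat.mod_self]
  set s0 : Fin (2 * n) := (finRotate (2 * n)) t with hs0
  by_cases h1 : (s0 : ℕ) < n
  · rw [phi_lt s0 h1]
    simp only [Equiv.sumComm_apply, Sum.swap_inl]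
    rw [Vm_inr, hrow]
    simp only [Fin.val_mk]
    by_cases h2 : (s0 : ℕ) = 0
    · rw [if_pos h2, if_neg (show ¬((t : ℕ) < n) from by
        rcases hcase with ⟨he, hl⟩ | ⟨he, he2⟩ <;> omega)]
      rw [_root_.inv_zpow, ← _root_.zpow_neg, ← zpow_add₀ hw]
      congr 1
      push_cast
      rcases hcase with ⟨he, hl⟩ | ⟨he, he2⟩ <;> omega
    · rw [if_neg h2, if_pos (show (t : ℕ) < n from by
        rcases hcase with ⟨he, hl⟩ | ⟨he, he2⟩ <;> omega)]
      rw [_root_.inv_zpow, ← _root_.zpow_neg, ← zpow_add₀ hw]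
      congr 1
      simp only [cE, Fin.val_mk]
      push_cast
      rcases hcase with ⟨he, hl⟩ | ⟨he, he2⟩ <;> omega
  · rw [phi_ge s0 h1]
    simp only [Equiv.sumComm_apply, Sum.swap_inr]
    rw [Vm_inl, hrow]
    simp only [Fin.val_mk]
    by_cases h2 : 2 * n - 1 - (s0 : ℕ) = n - 1
    · rw [if_pos h2, if_pos (show (t : ℕ) < n from by
        rcases hcase with ⟨he, hl⟩ | ⟨he, he2⟩ <;> omega)]
      rw [_root_.inv_zpow, ← _root_.zpow_neg, ← zpow_add₀ hw]
      congr 1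
      push_cast
      rcases hcase with ⟨he, hl⟩ | ⟨he, he2⟩ <;> omega
    · rw [if_neg h2, if_neg (show ¬((t : ℕ) < n) from by
        rcases hcase with ⟨he, hl⟩ | ⟨he, he2⟩ <;> omega)]
      rw [_root_.inv_zpow, ← _root_.zpow_neg, ← zpow_add₀ hw]
      congr 1
      simp only [bE, Fin.val_mk]
      push_cast
      rcases hcase with ⟨he, hl⟩ | ⟨he, he2⟩ <;> omega

lemma L4 (hn : 1 ≤ n) (hx : ∀ i, x i ≠ 0) :
    (N2m m n x).det = -(((Equiv.Perm.sign (perm_a n) : ℤ) : ℂ)) *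
      (Vm m n (m : ℤ) ((m : ℤ) + n) x).det := by
  have hperm : (phib n).trans (pe' n).symm = (perm_a n) * (finRotate (2 * n)) := by
    rw [phib, Equiv.trans_assoc, Equiv.self_trans_symm, Equiv.trans_refl]
    rfl
  have hsign : ((Equiv.Perm.sign ((phib n).trans (pe' n).symm) : ℤ) : ℂ)
      = -(((Equiv.Perm.sign (perm_a n) : ℤ) : ℂ)) := by
    rw [hperm, _root_.map_mul, sign_rot hn]
    push_cast
    ring
  rw [← hsign]
  refine det_via hx (pe' n) (phib n) _ _ ((m : ℤ) + n) ?_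
  intro h t
  have hw : zf x (pe n h) ≠ 0 := zf_ne hx _
  have hrow : zf x (pe' n h) = (zf x (pe n h))⁻¹ := by
    rw [show pe' n h = Equiv.sumComm (Fin n) (Fin n) (pe n h) from rfl, zf_swap]
  rw [N2m]
  simp only [Matrix.of_apply]
  rw [pv_eq x h, phib_eq]
  have hval := rot_val hn t
  have htlt := t.isLt
  have hcase : ((((finRotate (2 * n)) t : Fin (2 * n)) : ℕ) = (t : ℕ) + 1 ∧ (t : ℕ) + 1 < 2 * n)
      ∨ ((((finRotate (2 * n)) t : Fin (2 * n)) : ℕ) = 0 ∧ (t : ℕ) = 2 * n - 1) := by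
    by_cases hlt : (t : ℕ) + 1 < 2 * n
    · left
      exact ⟨by rw [hval]; exact Nat.mod_eq_of_lt hlt, hlt⟩
    · right
      refine ⟨?_, by omega⟩
      rw [hval, show (t : ℕ) + 1 = 2 * n from by omega, Nat.mod_self]
  set s0 : Fin (2 * n) := (finRotate (2 * n)) t with hs0
  by_cases h1 : (s0 : ℕ) < n
  · rw [phi_lt s0 h1]
    simp only [Equiv.sumComm_apply, Sum.swap_inl]
    rw [Vm_inr, hrow]
    simp only [Fin.val_mk]
    by_cases h2 : (s0 : ℕ) = 0
    · rw [if_pos h2, if_neg (show ¬((t : ℕ) < n - 1) from by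
        rcases hcase with ⟨he, hl⟩ | ⟨he, he2⟩ <;> omega)]
      rw [_root_.inv_zpow, ← _root_.zpow_neg, ← zpow_add₀ hw]
      congr 1
      push_cast
      rcases hcase with ⟨he, hl⟩ | ⟨he, he2⟩ <;> omega
    · rw [if_neg h2, if_pos (show (t : ℕ) < n - 1 from by
        rcases hcase with ⟨he, hl⟩ | ⟨he, he2⟩ <;> omega)]
      rw [_root_.inv_zpow, ← _root_.zpow_neg, ← zpow_add₀ hw]
      congr 1
      simp only [cE, Fin.val_mk]
      push_cast
      rcases hcase with ⟨he, hl⟩ | ⟨he, he2⟩ <;> omega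
  · rw [phi_ge s0 h1]
    simp only [Equiv.sumComm_apply, Sum.swap_inr]
    rw [Vm_inl, hrow]
    simp only [Fin.val_mk]
    by_cases h2 : 2 * n - 1 - (s0 : ℕ) = n - 1
    · rw [if_pos h2, if_neg (show ¬((t : ℕ) < n - 1) from by
        rcases hcase with ⟨he, hl⟩ | ⟨he, he2⟩ <;> omega)]
      rw [_root_.inv_zpow, ← _root_.zpow_neg, ← zpow_add₀ hw]
      congr 1
      push_cast
      rcases hcase with ⟨he, hl⟩ | ⟨he, he2⟩ <;> omega
    · rw [if_neg h2, if_neg (show ¬((t : ℕ) < n - 1) from by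
        rcases hcase with ⟨he, hl⟩ | ⟨he, he2⟩ <;> omega)]
      rw [_root_.inv_zpow, ← _root_.zpow_neg, ← zpow_add₀ hw]
      congr 1
      simp only [bE, Fin.val_mk]
      push_cast
      rcases hcase with ⟨he, hl⟩ | ⟨he, he2⟩ <;> omega

lemma key (hn : 1 ≤ n) (hx : ∀ i, x i ≠ 0) :
    (Am m n x).det * (Bm m n x).det =
      ((Equiv.Perm.sign (perm_a n) : ℤ) : ℂ) * ((N1m m n x).det + (N2m m n x).det) := by
  obtain ⟨n', rfl⟩ : ∃ k, n = k + 1 := ⟨n - 1, by omega⟩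
  set ε : ℂ := ((Equiv.Perm.sign (perm_a (n' + 1)) : ℤ) : ℂ) with hε
  have hee : ε * ε = 1 := by
    rcases Int.units_eq_one_or (Equiv.Perm.sign (perm_a (n' + 1))) with h | h <;>
      rw [hε, h] <;> norm_num
  have inv1 : ∀ a b : ℂ, a = ε * b → b = ε * a := by
    intro a b hab
    rw [hab, ← mul_assoc, hee, one_mul]
  have inv2 : ∀ a b : ℂ, a = -ε * b → b = -ε * a := by
    intro a b hab
    rw [hab, show -ε * (-ε * b) = (ε * ε) * b from by ring, hee, one_mul]
  have e1 := inv1 _ _ (L1 (m := m) (x := x) hn hx)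
  have e2 := inv1 _ _ (L2 (m := m) (x := x) hn hx)
  have h3 := L3 (m := m) (x := x) hn hx
  have h4 := L4 (m := m) (x := x) hn hx
  rw [← hε] at h3 h4
  have e3 := inv2 _ _ h3
  have e4 := inv2 _ _ h4
  have hW : ∀ p q : ℤ, (Wm m (n' + 1) p q x).det = (Vm m (n' + 1) p q x).det * (-2 : ℂ) ^ n' := by
    intro p q
    rw [WVT p q x, Matrix.det_mul, detT hn]
    simp only [Nat.add_sub_cancel]
  have hcomb : (-2 : ℂ) ^ (n' + 1) * ((Am m (n' + 1) x).det * (Bm m (n' + 1) x).det)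
      = (-2 : ℂ) ^ (n' + 1) * (ε * ((N1m m (n' + 1) x).det + (N2m m (n' + 1) x).det)) := by
    rw [← det_M x, split hn x, hW, hW, hW, hW, e1, e2, e3, e4]
    ring
  exact mul_left_cancel₀ (pow_ne_zero _ (by norm_num : (-2 : ℂ) ≠ 0)) hcomb

lemma hDnz (hdist : Function.Injective (pairVars x)) :
    (Matrix.of fun h t : Fin (2 * n) =>
      pairVars x h ^ (((2 * n : ℕ) : ℤ) - 1 - ((t : ℕ) : ℤ))).det ≠ 0 := by
  have heq : (Matrix.of fun h t : Fin (2 * n) =>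
      pairVars x h ^ (((2 * n : ℕ) : ℤ) - 1 - ((t : ℕ) : ℤ)))
      = (Matrix.vandermonde (pairVars x)).submatrix id ⇑(Fin.revPerm : Equiv.Perm (Fin (2 * n))) := by
    ext h t
    simp only [Matrix.of_apply, Matrix.submatrix_apply, id_eq, Matrix.vandermonde_apply]
    rw [show (Fin.revPerm : Equiv.Perm (Fin (2 * n))) t = Fin.rev t from rfl]
    rw [← zpow_natCast]
    congr 1
    rw [Fin.val_rev]
    have := t.isLt
    push_cast
    omega
  rw [heq, Matrix.det_permute', Matrix.det_vandermonde]
  apply mul_ne_zero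
  · rcases Int.units_eq_one_or (Equiv.Perm.sign (Fin.revPerm : Equiv.Perm (Fin (2 * n)))) with
      h | h <;> rw [h] <;> norm_num
  · rw [Finset.prod_ne_zero_iff]
    intro i _
    rw [Finset.prod_ne_zero_iff]
    intro j hj
    exact sub_ne_zero.mpr fun hEq => (ne_of_lt (Finset.mem_Ioi.mp hj)) (hdist hEq).symm

end lemmas

end SchurAux

/-- **Theorem 4.**  For `m ≥ 0`, `n ≥ 1` and nonzero complex numbers
`x₁,…,xₙ` with `x₁, x₁⁻¹, …, xₙ, xₙ⁻¹` pairwise distinct,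
`s_{((2m)^n)}(x₁,x₁⁻¹,…) + s_{((2m)^{n-1})}(x₁,x₁⁻¹,…)
  = sp_{(m^n)}(x₁,…,xₙ) · o^even_{(m^n)}(x₁,…,xₙ)`. -/
theorem schur_sum_even_rectangle_factorization
    (m n : ℕ) (hn : 1 ≤ n) (x : Fin n → ℂ) (hx : ∀ i, x i ≠ 0)
    (hdist : Function.Injective (pairVars x)) :
    schurChar (fun t : Fin (2 * n) => if (t : ℕ) < n then (2 * m : ℤ) else 0)
        (pairVars x) +
      schurChar (fun t : Fin (2 * n) => if (t : ℕ) < n - 1 then (2 * m : ℤ) else 0)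
        (pairVars x) =
      spChar (fun _ => (m : ℤ)) x * oevenChar (fun _ => (m : ℤ)) x := by
  classical
  unfold schurChar spChar oevenChar
  set ε : ℂ := ((Equiv.Perm.sign (SchurAux.perm_a n) : ℤ) : ℂ) with hε
  have hee : ε * ε = 1 := by
    rcases Int.units_eq_one_or (Equiv.Perm.sign (SchurAux.perm_a n)) with h | h <;>
      rw [hε, h] <;> norm_num
  have hεne : ε ≠ 0 := fun h0 => by rw [h0, mul_zero] at hee; exact zero_ne_one hee
  have hD := SchurAux.hDnz (n := n) (x := x) hdist
  set D : ℂ := (Matrix.of fun h t : Fin (2 * n) =>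
      pairVars x h ^ (((2 * n : ℕ) : ℤ) - 1 - ((t : ℕ) : ℤ))).det with hDdef
  -- identify numerator matrices
  have hnum1 : (Matrix.of fun h t : Fin (2 * n) => pairVars x h ^
      ((if (t : ℕ) < n then (2 * m : ℤ) else 0) + ((2 * n : ℕ) : ℤ) - 1 - ((t : ℕ) : ℤ)))
      = SchurAux.N1m m n x := rfl
  have hnum2 : (Matrix.of fun h t : Fin (2 * n) => pairVars x h ^
      ((if (t : ℕ) < n - 1 then (2 * m : ℤ) else 0) + ((2 * n : ℕ) : ℤ) - 1 - ((t : ℕ) : ℤ)))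
      = SchurAux.N2m m n x := rfl
  have hsnum : (Matrix.of fun h t : Fin n => x h ^ ((m : ℤ) + (n : ℤ) - ((t : ℕ) : ℤ)) -
      x h ^ (-((m : ℤ) + (n : ℤ) - ((t : ℕ) : ℤ)))) = SchurAux.Bm m n x := rfl
  have honum : (Matrix.of fun h t : Fin n => x h ^ ((m : ℤ) + (n : ℤ) - 1 - ((t : ℕ) : ℤ)) +
      x h ^ (-((m : ℤ) + (n : ℤ) - 1 - ((t : ℕ) : ℤ)))) = SchurAux.Am m n x := rfl
  have hsden : (Matrix.of fun h t : Fin n => x h ^ ((n : ℤ) - ((t : ℕ) : ℤ)) -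
      x h ^ (-((n : ℤ) - ((t : ℕ) : ℤ)))) = SchurAux.Bm 0 n x := by
    ext h t
    simp [SchurAux.Bm, SchurAux.cE]
  have hoden : (Matrix.of fun h t : Fin n => x h ^ ((n : ℤ) - 1 - ((t : ℕ) : ℤ)) +
      x h ^ (-((n : ℤ) - 1 - ((t : ℕ) : ℤ)))) = SchurAux.Am 0 n x := by
    ext h t
    simp [SchurAux.Am, SchurAux.bE]
  have hN10 : SchurAux.N1m 0 n x = Matrix.of (fun h t : Fin (2 * n) =>
      pairVars x h ^ (((2 * n : ℕ) : ℤ) - 1 - ((t : ℕ) : ℤ))) := by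
    ext h t
    simp only [SchurAux.N1m, Matrix.of_apply]
    congr 1
    simp
  have hN20 : SchurAux.N2m 0 n x = Matrix.of (fun h t : Fin (2 * n) =>
      pairVars x h ^ (((2 * n : ℕ) : ℤ) - 1 - ((t : ℕ) : ℤ))) := by
    ext h t
    simp only [SchurAux.N2m, Matrix.of_apply]
    congr 1
    simp
  have hkey := SchurAux.key (m := m) (n := n) (x := x) hn hx
  have hkey0 := SchurAux.key (m := 0) (n := n) (x := x) hn hx
  rw [hN10, hN20, ← hDdef] at hkey0
  rw [← hε] at hkey hkey0
  -- the goal with identified matrices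
  rw [hnum1, hnum2, hsnum, honum, hsden, hoden]
  have hprod0 : (SchurAux.Am 0 n x).det * (SchurAux.Bm 0 n x).det ≠ 0 := by
    rw [hkey0]
    rw [show D + D = 2 * D from by ring]
    exact mul_ne_zero hεne (mul_ne_zero two_ne_zero hD)
  have hA0 : (SchurAux.Am 0 n x).det ≠ 0 := left_ne_zero_of_mul hprod0
  have hB0 : (SchurAux.Bm 0 n x).det ≠ 0 := right_ne_zero_of_mul hprod0
  rw [← add_div, div_mul_div_comm, div_eq_div_iff hD (mul_ne_zero hB0 hA0)]
  linear_combination ((SchurAux.N1m m n x).det + (SchurAux.N2m m n x).det) * hkey0 -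
    2 * D * hkey
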